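/- For every real number a, the integral ∫₀^∞ x³ · erf(a x / √2) · exp(-x²/2) dx equals a (2a² + 3) / (a² + 1)^{3/2}. -/

import Mathlib

open Real MeasureTheory Set

noncomputable def erf (z : ℝ) : ℝ := 2 / Real.sqrt π * ∫ u in (0:ℝ)..z, Real.exp (-u ^ 2)

lemma erf_hasDerivAt (z : ℝ) :
    HasDerivAt erf (2 / Real.sqrt π * Real.exp (-z ^ 2)) z := by
  have hc : Continuous fun u : ℝ => Real.exp (-u ^ 2) := by continuity
  have h : HasDerivAt (fun z : ℝ => ∫ u in (0:ℝ)..z, Real.exp (-u ^ 2))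
      (Real.exp (-z ^ 2)) z := by
    refine intervalIntegral.integral_hasDerivAt_right
      (hc.intervalIntegrable _ _) ?_ hc.continuousAt
    exact hc.stronglyMeasurableAtFilter _ _
  exact h.const_mul (2 / Real.sqrt π)

lemma erf_continuous : Continuous erf := by
  rw [continuous_iff_continuousAt]
  exact fun z => (erf_hasDerivAt z).continuousAt

lemma abs_erf_le (z : ℝ) : |erf z| ≤ 2 / Real.sqrt π * |z| := by
  have h : ‖∫ u in (0:ℝ)..z, Real.exp (-u ^ 2)‖ ≤ 1 * |z - 0| := by
    apply intervalIntegral.norm_integral_le_of_norm_le_const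
    intro u _
    rw [Real.norm_eq_abs, abs_of_pos (Real.exp_pos _)]
    calc Real.exp (-u ^ 2) ≤ Real.exp 0 :=
          Real.exp_le_exp.mpr (neg_nonpos.mpr (sq_nonneg u))
      _ = 1 := Real.exp_zero
  rw [Real.norm_eq_abs, one_mul, sub_zero] at h
  have h0 : (0:ℝ) ≤ 2 / Real.sqrt π := by positivity
  calc |erf z| = 2 / Real.sqrt π * |∫ u in (0:ℝ)..z, Real.exp (-u ^ 2)| := by
        rw [erf, abs_mul, abs_of_nonneg h0]
    _ ≤ 2 / Real.sqrt π * |z| := by gcongr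

/-- The pointwise derivative in `a` of the integrand. -/
noncomputable def Fd (a x : ℝ) : ℝ :=
  x ^ 3 * (2 / Real.sqrt π * Real.exp (-(a * x / Real.sqrt 2) ^ 2) * (x / Real.sqrt 2)) *
    Real.exp (-x ^ 2 / 2)

lemma Fd_eq (a x : ℝ) : Fd a x = 2 / Real.sqrt π / Real.sqrt 2 *
    (x ^ 4 * (Real.exp (-(a * x / Real.sqrt 2) ^ 2) * Real.exp (-x ^ 2 / 2))) := by
  unfold Fd; ring

lemma Fd_nonneg (a x : ℝ) : 0 ≤ Fd a x := by
  rw [Fd_eq]; positivity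

lemma Fd_le (a x : ℝ) :
    Fd a x ≤ 2 / Real.sqrt π / Real.sqrt 2 * (x ^ 4 * Real.exp (-x ^ 2 / 2)) := by
  rw [Fd_eq]
  calc 2 / Real.sqrt π / Real.sqrt 2 *
      (x ^ 4 * (Real.exp (-(a * x / Real.sqrt 2) ^ 2) * Real.exp (-x ^ 2 / 2)))
      ≤ 2 / Real.sqrt π / Real.sqrt 2 * (x ^ 4 * (1 * Real.exp (-x ^ 2 / 2))) := by
        gcongr
        calc Real.exp (-(a * x / Real.sqrt 2) ^ 2) ≤ Real.exp 0 :=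
              Real.exp_le_exp.mpr (neg_nonpos.mpr (sq_nonneg _))
          _ = 1 := Real.exp_zero
    _ = 2 / Real.sqrt π / Real.sqrt 2 * (x ^ 4 * Real.exp (-x ^ 2 / 2)) := by ring

lemma hasDerivAt_inner (x a : ℝ) :
    HasDerivAt (fun a : ℝ => x ^ 3 * erf (a * x / Real.sqrt 2) * Real.exp (-x ^ 2 / 2))
      (Fd a x) a := by
  have h1 : HasDerivAt (fun a : ℝ => a * x / Real.sqrt 2) (x / Real.sqrt 2) a := by
    simpa [mul_div_assoc] using hasDerivAt_mul_const (x / Real.sqrt 2) (x := a)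
  have h2 : HasDerivAt (fun a : ℝ => erf (a * x / Real.sqrt 2))
      (2 / Real.sqrt π * Real.exp (-(a * x / Real.sqrt 2) ^ 2) * (x / Real.sqrt 2)) a :=
    (erf_hasDerivAt (a * x / Real.sqrt 2)).comp (h₂ := erf) (h := fun a : ℝ => a * x / Real.sqrt 2) a h1
  simpa [Fd] using (h2.const_mul (x ^ 3)).mul_const (Real.exp (-x ^ 2 / 2))

lemma integrable_pow4 : IntegrableOn (fun x : ℝ => x ^ 4 * Real.exp (-x ^ 2 / 2)) (Ioi 0) := by
  have h := integrableOn_rpow_mul_exp_neg_mul_sq (b := 1/2) (by norm_num) (s := 4) (by norm_num)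
  apply h.congr_fun ?_ measurableSet_Ioi
  intro x hx
  simp only []
  rw [show (4:ℝ) = ((4:ℕ):ℝ) by norm_num, Real.rpow_natCast]
  ring_nf

lemma integrable_Fintegrand (a : ℝ) :
    Integrable (fun x : ℝ => x ^ 3 * erf (a * x / Real.sqrt 2) * Real.exp (-x ^ 2 / 2))
      (volume.restrict (Ioi 0)) := by
  have hcont : Continuous fun x : ℝ => x ^ 3 * erf (a * x / Real.sqrt 2) *
      Real.exp (-x ^ 2 / 2) := by
    apply Continuous.mul
    · exact (continuous_pow 3).mul (erf_continuous.comp (by continuity))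
    · continuity
  refine Integrable.mono'
      (g := fun x : ℝ => 2 / Real.sqrt π * |a| / Real.sqrt 2 * (x ^ 4 * Real.exp (-x ^ 2 / 2)))
      (integrable_pow4.const_mul _) hcont.aestronglyMeasurable ?_
  filter_upwards [ae_restrict_mem measurableSet_Ioi] with x hx
  have hx' : (0:ℝ) < x := hx
  have hx3 : (0:ℝ) ≤ x ^ 3 := by positivity
  have habs : |a * x / Real.sqrt 2| = |a| * x / Real.sqrt 2 := by
    rw [abs_div, abs_mul, abs_of_pos hx', abs_of_pos (Real.sqrt_pos.mpr two_pos)]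
  calc ‖x ^ 3 * erf (a * x / Real.sqrt 2) * Real.exp (-x ^ 2 / 2)‖
      = x ^ 3 * |erf (a * x / Real.sqrt 2)| * Real.exp (-x ^ 2 / 2) := by
        rw [norm_mul, norm_mul, Real.norm_eq_abs, Real.norm_eq_abs, Real.norm_eq_abs,
          abs_of_nonneg hx3, abs_of_pos (Real.exp_pos _)]
    _ ≤ x ^ 3 * (2 / Real.sqrt π * |a * x / Real.sqrt 2|) * Real.exp (-x ^ 2 / 2) := by
        gcongr
        exact abs_erf_le _
    _ = 2 / Real.sqrt π * |a| / Real.sqrt 2 * (x ^ 4 * Real.exp (-x ^ 2 / 2)) := by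
        rw [habs]; ring

lemma G_hasDerivAt (a₀ : ℝ) :
    HasDerivAt (fun a : ℝ => ∫ x in Ioi (0:ℝ),
        x ^ 3 * erf (a * x / Real.sqrt 2) * Real.exp (-x ^ 2 / 2))
      (∫ x in Ioi (0:ℝ), Fd a₀ x) a₀ := by
  have hFd_cont : Continuous (Fd a₀) := by unfold Fd; fun_prop
  have key := hasDerivAt_integral_of_dominated_loc_of_deriv_le
    (μ := volume.restrict (Ioi (0:ℝ)))
    (F := fun a x => x ^ 3 * erf (a * x / Real.sqrt 2) * Real.exp (-x ^ 2 / 2))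
    (F' := fun a x => Fd a x)
    (bound := fun x => 2 / Real.sqrt π / Real.sqrt 2 * (x ^ 4 * Real.exp (-x ^ 2 / 2)))
    (x₀ := a₀) (Metric.ball_mem_nhds a₀ zero_lt_one) ?_ (integrable_Fintegrand a₀) ?_ ?_
    (integrable_pow4.const_mul _) ?_
  · exact key.2
  · filter_upwards with a
    apply Continuous.aestronglyMeasurable
    apply Continuous.mul
    · exact (continuous_pow 3).mul (erf_continuous.comp (by continuity))
    · continuity
  · exact hFd_cont.aestronglyMeasurable
  · filter_upwards with x a _
    rw [Real.norm_eq_abs, abs_of_nonneg (Fd_nonneg a x)]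
    exact Fd_le a x
  · filter_upwards with x a _
    exact hasDerivAt_inner x a

lemma gauss_moment4 {b : ℝ} (hb : 0 < b) :
    ∫ x in Ioi (0:ℝ), x ^ 4 * Real.exp (-b * x ^ 2) =
      b ^ (-(5:ℝ)/2) * (3 / 8) * Real.sqrt π := by
  have h := integral_rpow_mul_exp_neg_mul_rpow (p := 2) (q := 4) (b := b)
    two_pos (by norm_num) hb
  have heq : ∀ x ∈ Ioi (0:ℝ),
      x ^ (4:ℝ) * Real.exp (-b * x ^ (2:ℝ)) = x ^ 4 * Real.exp (-b * x ^ 2) := by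
    intro x hx
    rw [show (4:ℝ) = ((4:ℕ):ℝ) by norm_num, show (2:ℝ) = ((2:ℕ):ℝ) by norm_num,
      Real.rpow_natCast, Real.rpow_natCast]
  rw [setIntegral_congr_fun measurableSet_Ioi heq] at h
  rw [h]
  have hG : Real.Gamma ((4 + 1) / 2) = 3 / 4 * Real.sqrt π := by
    have h1 : ((4:ℝ) + 1) / 2 = 3 / 2 + 1 := by norm_num
    have h2 : (3:ℝ) / 2 = 1 / 2 + 1 := by norm_num
    rw [h1, Real.Gamma_add_one (by norm_num), h2, Real.Gamma_add_one (by norm_num),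
      Real.Gamma_one_half_eq]
    ring
  rw [hG]
  have he : (-((4:ℝ) + 1) / 2) = -(5:ℝ)/2 := by norm_num
  rw [he]
  ring

lemma two_rpow_half_five : (2:ℝ) ^ ((5:ℝ)/2) = 4 * Real.sqrt 2 := by
  have h : ((5:ℝ)/2) = ((2:ℕ):ℝ) + (1/2 : ℝ) := by norm_num
  rw [h, Real.rpow_add two_pos, Real.rpow_natCast, Real.sqrt_eq_rpow 2]
  norm_num

lemma integral_Fd (a : ℝ) :
    ∫ x in Ioi (0:ℝ), Fd a x = 3 * (a ^ 2 + 1) ^ (-(5:ℝ)/2) := by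
  have hb : (0:ℝ) < (a ^ 2 + 1) / 2 := by positivity
  have hs2 : Real.sqrt 2 ^ 2 = 2 := Real.sq_sqrt (by norm_num)
  have heq : ∀ x ∈ Ioi (0:ℝ), Fd a x = 2 / Real.sqrt π / Real.sqrt 2 *
      (x ^ 4 * Real.exp (-((a ^ 2 + 1) / 2) * x ^ 2)) := by
    intro x _
    rw [Fd_eq, ← Real.exp_add]
    congr 3
    rw [div_pow, mul_pow, hs2]
    ring
  rw [setIntegral_congr_fun measurableSet_Ioi heq, integral_const_mul, gauss_moment4 hb]
  have hdiv : ((a ^ 2 + 1) / 2) ^ (-(5:ℝ)/2) =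
      (a ^ 2 + 1) ^ (-(5:ℝ)/2) / (2:ℝ) ^ (-(5:ℝ)/2) := by
    rw [Real.div_rpow (by positivity) (by norm_num)]
  have h2r : (2:ℝ) ^ (-(5:ℝ)/2) = 1 / (4 * Real.sqrt 2) := by
    rw [show (-(5:ℝ)/2) = -((5:ℝ)/2) by norm_num, Real.rpow_neg (by norm_num),
      two_rpow_half_five]
    rw [inv_eq_one_div]
  rw [hdiv, h2r]
  have hπ : Real.sqrt π ≠ 0 := by
    have : (0:ℝ) < π := Real.pi_pos
    positivity
  have h2 : Real.sqrt 2 ≠ 0 := by positivity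
  field_simp
  nlinarith [hs2, Real.sqrt_nonneg 2, Real.sqrt_nonneg π,
    Real.rpow_pos_of_pos (show (0:ℝ) < a ^ 2 + 1 by positivity) (-(5:ℝ)/2)]

lemma R_hasDerivAt (a : ℝ) :
    HasDerivAt (fun a : ℝ => a * (2 * a ^ 2 + 3) / (a ^ 2 + 1) ^ ((3:ℝ)/2))
      (3 * (a ^ 2 + 1) ^ (-(5:ℝ)/2)) a := by
  have ht : (0:ℝ) < a ^ 2 + 1 := by positivity
  have h1 : HasDerivAt (fun a : ℝ => a ^ 2 + 1) (2 * a) a := by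
    simpa using (hasDerivAt_pow 2 a).add_const 1
  have h2 : HasDerivAt (fun a : ℝ => (a ^ 2 + 1) ^ ((3:ℝ)/2))
      (2 * a * ((3:ℝ)/2) * (a ^ 2 + 1) ^ ((3:ℝ)/2 - 1)) a :=
    h1.rpow_const (Or.inl ht.ne')
  have h3 : HasDerivAt (fun a : ℝ => a * (2 * a ^ 2 + 3)) (6 * a ^ 2 + 3) a := by
    have := (hasDerivAt_id a).mul (((hasDerivAt_pow 2 a).const_mul 2).add_const 3)
    convert this using 1
    · rfl
    · rfl
    · rfl
    simp only [id_eq, pow_one, Nat.cast_ofNat]; ring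
  have h4 := h3.div h2 (Real.rpow_pos_of_pos ht _).ne'
  convert h4 using 1
  · rfl
  · rfl
  · rfl
  have e1 : (a ^ 2 + 1) ^ ((3:ℝ)/2 - 1) = (a ^ 2 + 1) ^ ((1:ℝ)/2) := by norm_num
  have e2 : (a ^ 2 + 1) ^ ((3:ℝ)/2) = (a ^ 2 + 1) * (a ^ 2 + 1) ^ ((1:ℝ)/2) := by
    rw [show ((3:ℝ)/2) = 1 + 1/2 by norm_num, Real.rpow_add ht, Real.rpow_one]
  have e3 : (a ^ 2 + 1) ^ (-(5:ℝ)/2) =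
      (a ^ 2 + 1) ^ ((1:ℝ)/2) / (a ^ 2 + 1) ^ (3:ℕ) := by
    rw [show (-(5:ℝ)/2) = 1/2 - ((3:ℕ):ℝ) by norm_num, Real.rpow_sub ht,
      Real.rpow_natCast]
  rw [e1, e2, e3]
  set s := (a ^ 2 + 1) ^ ((1:ℝ)/2) with hsdef
  have hs : (0:ℝ) < s := Real.rpow_pos_of_pos ht _
  have hss : s ^ 2 = a ^ 2 + 1 := by
    rw [hsdef, ← Real.rpow_natCast ((a ^ 2 + 1) ^ ((1:ℝ)/2)) 2, ← Real.rpow_mul ht.le]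
    norm_num
  field_simp
  linear_combination 3 * hss


theorem stmt6 (a : ℝ) :
    ∫ x in Ioi (0 : ℝ), x ^ 3 * erf (a * x / Real.sqrt 2) * Real.exp (-x ^ 2 / 2) =
      a * (2 * a ^ 2 + 3) / (a ^ 2 + 1) ^ ((3 : ℝ) / 2) := by
  set G : ℝ → ℝ := fun a => ∫ x in Ioi (0:ℝ),
    x ^ 3 * erf (a * x / Real.sqrt 2) * Real.exp (-x ^ 2 / 2) with hGdef
  set R : ℝ → ℝ := fun a => a * (2 * a ^ 2 + 3) / (a ^ 2 + 1) ^ ((3:ℝ)/2) with hRdef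
  have hd : ∀ c : ℝ, HasDerivAt (fun x => G x - R x) 0 c := by
    intro c
    have h1 := G_hasDerivAt c
    rw [integral_Fd] at h1
    have h5 := h1.sub (R_hasDerivAt c)
    simp at h5
    exact h5
  have hconst : G a - R a = G 0 - R 0 :=
    is_const_of_deriv_eq_zero (fun x => (hd x).differentiableAt)
      (fun x => (hd x).deriv) a 0
  have herf0 : erf 0 = 0 := by simp [erf]
  have hG0 : G 0 = 0 := by
    rw [hGdef]
    simp [herf0]
  have hR0 : R 0 = 0 := by
    rw [hRdef]
    simp
  rw [hG0, hR0, sub_zero] at hconst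
  have : G a = R a := by linarith
  exact this
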